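/- arXiv:2404.09072 — 2 statements merged into one kernel-verified Lean document; each statement's English description precedes it below -/
import Mathlib

section
/- Let W be the weighted left creation operators for positive weights {b_α}. For each i ∈ {1,…,n}, the operator W_i* W_i − ∑_{j=1}^n W_j W_j* is diagonal in the basis {e_α}: it maps e_α to (b_α/b_{g_iα} − b_γ/b_{g_pγ}) e_α whenever α = g_p γ, and e_{g_0} to (1/b_{g_i}) e_{g_0}. If moreover lim_{|γ|→∞} (b_{g_pγ}/b_{g_i g_p γ} − b_γ/b_{g_pγ}) = 0 for all p, then W_i* W_i − ∑_j W_j W_j* is a compact operator. -/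
open scoped ENNReal

noncomputable section

/-- Words over the alphabet `Fin n`: elements of the free monoid `F_n^+`. -/
abbrev Word (n : ℕ) := List (Fin n)

/-- The full Fock space `F²(H_n)`, with orthonormal basis indexed by words. -/
abbrev Fock (n : ℕ) := lp (fun _ : Word n => ℂ) 2

/-- The basis vector `e_α` of the full Fock space. -/
def fockE {n : ℕ} (α : Word n) : Fock n := lp.single 2 α 1

lemma inner_fockE {n : ℕ} (α : Word n) (f : Fock n) : (inner ℂ (fockE α) f) = f α := by
  rw [fockE, lp.inner_single_left]; simp

lemma fockE_apply {n : ℕ} (α β : Word n) : (fockE β) α = if α = β then 1 else 0 := by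
  rw [fockE, lp.single_apply]; split_ifs with h <;> simp [h]

lemma single_eq_smul_fockE {n : ℕ} (β : Word n) (c : ℂ) :
    (lp.single 2 β c : Fock n) = c • fockE β := by
  rw [fockE, ← lp.single_smul]; norm_num

lemma rankOne_compact {n : ℕ} (g v : Fock n) :
    IsCompactOperator ((innerSL ℂ g).smulRight v) := by
  rw [isCompactOperator_iff_exists_mem_nhds_image_subset_compact]
  refine ⟨Metric.ball 0 1, Metric.ball_mem_nhds _ one_pos,
    (fun t : ℂ => t • v) '' Metric.closedBall 0 ‖g‖,
    (isCompact_closedBall 0 _).image (by continuity), ?_⟩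
  rintro y ⟨x, hx, rfl⟩
  refine ⟨inner ℂ g x, ?_, rfl⟩
  rw [Metric.mem_closedBall, dist_zero_right]
  calc ‖(inner ℂ g x)‖ ≤ ‖g‖ * ‖x‖ := norm_inner_le_norm g x
  _ ≤ ‖g‖ * 1 := by
      have := Metric.mem_ball.mp hx
      rw [dist_zero_right] at this
      exact mul_le_mul_of_nonneg_left this.le (norm_nonneg g)
  _ = ‖g‖ := mul_one _

lemma sum_compact {n : ℕ} {ι : Type*} (s : Finset ι) (F : ι → (Fock n →L[ℂ] Fock n))
    (h : ∀ a ∈ s, IsCompactOperator (F a)) : IsCompactOperator ⇑(∑ a ∈ s, F a) := by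
  classical
  induction s using Finset.cons_induction with
  | empty => simpa using (isCompactOperator_zero : IsCompactOperator (0 : Fock n → Fock n))
  | cons a s ha ih =>
      rw [Finset.sum_cons]
      have h1 := h a (Finset.mem_cons_self a s)
      have h2 := ih (fun x hx => h x (Finset.mem_cons_of_mem hx))
      exact h1.add h2

set_option maxHeartbeats 1000000 in
lemma diag_compact {n : ℕ} (T : Fock n →L[ℂ] Fock n) (lam : Word n → ℝ)
    (hT : ∀ α, T (fockE α) = ((lam α : ℝ) : ℂ) • fockE α)
    (hlim : ∀ ε : ℝ, 0 < ε → ∃ m : ℕ, ∀ α : Word n, m ≤ α.length → |lam α| < ε) :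
    IsCompactOperator T := by
  classical
  set s : ℕ → Finset (Word n) := fun k => (List.finite_length_le (Fin n) k).toFinset with hs
  have hmem : ∀ k (β : Word n), β ∈ s k ↔ β.length ≤ k := by
    intro k β; simp [hs, Set.Finite.mem_toFinset]
  set D : ℕ → (Fock n →L[ℂ] Fock n) := fun k =>
    ∑ α ∈ s k, (innerSL ℂ (fockE α)).smulRight (((lam α : ℝ) : ℂ) • fockE α) with hD
  have hDcompact : ∀ k, IsCompactOperator (D k) := by
    intro k
    simp only [hD]
    exact sum_compact (s k) _ (fun a _ => rankOne_compact _ _)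
  have hkey : ∀ k (β : Word n) (c : ℂ),
      (T - D k) (lp.single 2 β c) =
        lp.single 2 β ((if β ∈ s k then 0 else ((lam β : ℝ) : ℂ)) * c) := by
    intro k β c
    rw [ContinuousLinearMap.sub_apply]
    have hTs : T (lp.single 2 β c) = c • (((lam β : ℝ) : ℂ) • fockE β) := by
      rw [single_eq_smul_fockE, map_smul, hT]
    have hDs : D k (lp.single 2 β c) =
        (if β ∈ s k then c • (((lam β : ℝ) : ℂ) • fockE β) else 0) := by
      rw [hD]
      rw [ContinuousLinearMap.sum_apply]
      have h1 : ∀ α ∈ s k, ((innerSL ℂ (fockE α)).smulRight (((lam α : ℝ) : ℂ) • fockE α))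
          (lp.single 2 β c) =
          (if α = β then c • (((lam α : ℝ) : ℂ) • fockE α) else 0) := by
        intro α _
        have h2 : ((innerSL ℂ (fockE α)).smulRight (((lam α : ℝ) : ℂ) • fockE α))
            (lp.single 2 β c)
            = (inner ℂ (fockE α) (lp.single 2 β c)) • (((lam α : ℝ) : ℂ) • fockE α) := rfl
        rw [h2, inner_fockE]
        have h3 : (lp.single 2 β c : Fock n) α = if α = β then c else 0 := by
          rw [lp.single_apply]; split_ifs with h <;> simp [h]
        rw [h3, ite_smul, zero_smul]
      rw [Finset.sum_congr rfl h1, Finset.sum_ite_eq' (s k) β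
        (fun α => c • (((lam α : ℝ) : ℂ) • fockE α))]
    rw [hTs, hDs, single_eq_smul_fockE]
    split_ifs with h
    · simp
    · rw [sub_zero, smul_smul, mul_comm]
  have hbound : ∀ (k : ℕ) (ε : ℝ), 0 ≤ ε → (∀ β : Word n, β ∉ s k → |lam β| ≤ ε) →
      ‖T - D k‖ ≤ ε := by
    intro k ε hε hβ
    refine ContinuousLinearMap.opNorm_le_bound _ hε (fun f => ?_)
    set A := T - D k with hA
    set μ : Word n → ℂ := fun β => (if β ∈ s k then 0 else ((lam β : ℝ) : ℂ)) with hμ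
    have hμle : ∀ β, ‖μ β‖ ≤ ε := by
      intro β
      by_cases h : β ∈ s k
      · simp [hμ, h, hε]
      · simpa [hμ, h, Complex.norm_real, Real.norm_eq_abs] using hβ β h
    have hclosed : IsClosed {f : Fock n | ‖A f‖ ≤ ε * ‖f‖} :=
      isClosed_le (continuous_norm.comp A.continuous) (continuous_const.mul continuous_norm)
    have h2 : (0:ℝ) < (2 : ℝ≥0∞).toReal := by norm_num
    have hparts : ∀ t : Finset (Word n),
        ‖A (∑ β ∈ t, lp.single 2 β (f β))‖ ≤ ε * ‖∑ β ∈ t, lp.single 2 β (f β)‖ := by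
      intro t
      have hAg : A (∑ β ∈ t, lp.single 2 β (f β)) = ∑ β ∈ t, lp.single 2 β (μ β * f β) := by
        rw [map_sum]
        exact Finset.sum_congr rfl (fun β _ => hkey k β (f β))
      have hn1 : ‖∑ β ∈ t, lp.single 2 β (μ β * f β)‖ ^ (2 : ℝ≥0∞).toReal
          = ∑ β ∈ t, ‖μ β * f β‖ ^ (2 : ℝ≥0∞).toReal :=
        lp.norm_sum_single h2 (fun β => μ β * f β) t
      have hn2 : ‖∑ β ∈ t, lp.single 2 β (f β)‖ ^ (2 : ℝ≥0∞).toReal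
          = ∑ β ∈ t, ‖f β‖ ^ (2 : ℝ≥0∞).toReal :=
        lp.norm_sum_single h2 (fun β => (f β : ℂ)) t
      have hle : ∑ β ∈ t, ‖μ β * f β‖ ^ (2 : ℝ≥0∞).toReal
          ≤ (ε * ‖∑ β ∈ t, lp.single 2 β (f β)‖) ^ (2 : ℝ≥0∞).toReal := by
        have hterm : ∀ β ∈ t, ‖μ β * f β‖ ^ (2 : ℝ≥0∞).toReal
            ≤ ε ^ (2 : ℝ≥0∞).toReal * ‖f β‖ ^ (2 : ℝ≥0∞).toReal := by
          intro β _
          rw [← Real.mul_rpow hε (norm_nonneg _)]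
          refine Real.rpow_le_rpow (norm_nonneg _) ?_ h2.le
          rw [norm_mul]
          exact mul_le_mul_of_nonneg_right (hμle β) (norm_nonneg _)
        calc ∑ β ∈ t, ‖μ β * f β‖ ^ (2 : ℝ≥0∞).toReal
            ≤ ∑ β ∈ t, ε ^ (2 : ℝ≥0∞).toReal * ‖f β‖ ^ (2 : ℝ≥0∞).toReal :=
              Finset.sum_le_sum hterm
          _ = ε ^ (2 : ℝ≥0∞).toReal * ∑ β ∈ t, ‖f β‖ ^ (2 : ℝ≥0∞).toReal :=
              (Finset.mul_sum _ _ _).symm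
          _ = ε ^ (2 : ℝ≥0∞).toReal * ‖∑ β ∈ t, lp.single 2 β (f β)‖ ^ (2 : ℝ≥0∞).toReal := by
              rw [hn2]
          _ = (ε * ‖∑ β ∈ t, lp.single 2 β (f β)‖) ^ (2 : ℝ≥0∞).toReal :=
              (Real.mul_rpow hε (norm_nonneg _)).symm
      rw [hAg]
      exact (Real.rpow_le_rpow_iff (norm_nonneg _)
        (mul_nonneg hε (norm_nonneg _)) h2).mp (hn1.trans_le hle)
    have hhs := lp.hasSum_single (E := fun _ : Word n => ℂ) ENNReal.ofNat_ne_top f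
    have hf : f ∈ {f : Fock n | ‖A f‖ ≤ ε * ‖f‖} :=
      hclosed.mem_of_tendsto hhs (Filter.Eventually.of_forall (fun t => hparts t))
    exact hf
  have htend : Filter.Tendsto D Filter.atTop (nhds T) := by
    rw [Metric.tendsto_atTop]
    intro ε hε
    obtain ⟨m, hm⟩ := hlim (ε/2) (by linarith)
    refine ⟨m, fun k hk => ?_⟩
    have hb : ‖T - D k‖ ≤ ε/2 := by
      refine hbound k (ε/2) (by linarith) (fun β hβ => ?_)
      have hlen : ¬ β.length ≤ k := by rwa [hmem] at hβ
      exact (hm β (by omega)).le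
    calc dist (D k) T = ‖T - D k‖ := by rw [dist_eq_norm, ← neg_sub, norm_neg]
      _ ≤ ε/2 := hb
      _ < ε := by linarith
  exact isCompactOperator_of_tendsto htend (Filter.Eventually.of_forall hDcompact)

section Adj
variable {n : ℕ} (b : Word n → ℝ) (W : Fin n → (Fock n →L[ℂ] Fock n))
  (hW : ∀ (i : Fin n) (α : Word n), W i (fockE α) =
      (Real.sqrt (b α / b (i :: α)) : ℂ) • fockE (i :: α))

include hW

lemma adj_coord (j : Fin n) (β α : Word n) :
    (ContinuousLinearMap.adjoint (W j) (fockE β)) α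
      = if j :: α = β then (Real.sqrt (b α / b (j :: α)) : ℂ) else 0 := by
  rw [← inner_fockE, ContinuousLinearMap.adjoint_inner_right, hW, inner_smul_left,
    inner_fockE, fockE_apply]
  simp only [Complex.conj_ofReal]
  split_ifs with h <;> simp

lemma adj_cons (j : Fin n) (γ : Word n) :
    ContinuousLinearMap.adjoint (W j) (fockE (j :: γ))
      = (Real.sqrt (b γ / b (j :: γ)) : ℂ) • fockE γ := by
  refine lp.ext (funext fun α => ?_)
  rw [adj_coord b W hW]
  have h1 : ((Real.sqrt (b γ / b (j :: γ)) : ℂ) • fockE γ) α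
      = (Real.sqrt (b γ / b (j :: γ)) : ℂ) * (fockE γ) α := rfl
  rw [h1, fockE_apply]
  by_cases h : α = γ
  · subst h; simp
  · rw [if_neg (by simpa using h), if_neg h, mul_zero]

lemma adj_ne (j : Fin n) (β : Word n) (hβ : ∀ γ, β ≠ j :: γ) :
    ContinuousLinearMap.adjoint (W j) (fockE β) = 0 := by
  refine lp.ext (funext fun α => ?_)
  rw [adj_coord b W hW, if_neg (fun h => hβ α h.symm)]
  rfl

end Adj

set_option maxHeartbeats 1000000 in
/-- for the weighted left creation operators `W` associated with positive
weights `b` (with `b_{g₀}=1`), the operator `W_i*W_i − ∑_j W_jW_j*` is diagonal: it maps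
`e_α` to `(b_α/b_{g_iα} − b_γ/b_{g_pγ}) e_α` when `α = g_p γ`, and `e_{g₀}` to
`(1/b_{g_i}) e_{g₀}`.  If moreover `b_{g_pγ}/b_{g_ig_pγ} − b_γ/b_{g_pγ} → 0` as
`|γ| → ∞`, uniformly over `p`, then `W_i*W_i − ∑_j W_jW_j*` is a compact operator. -/
theorem stmt17 {n : ℕ} (b : Word n → ℝ) (hbpos : ∀ α, 0 < b α) (hb0 : b [] = 1)
    (hsup : ∀ i : Fin n, ∃ C : ℝ, ∀ α, b α / b (i :: α) ≤ C)
    (W : Fin n → (Fock n →L[ℂ] Fock n))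
    (hW : ∀ (i : Fin n) (α : Word n), W i (fockE α) =
      (Real.sqrt (b α / b (i :: α)) : ℂ) • fockE (i :: α))
    (i : Fin n) :
    (∀ (p : Fin n) (γ : Word n),
      (ContinuousLinearMap.adjoint (W i) * W i -
          ∑ j : Fin n, W j * ContinuousLinearMap.adjoint (W j)) (fockE (p :: γ)) =
        ((b (p :: γ) / b (i :: p :: γ) - b γ / b (p :: γ) : ℝ) : ℂ) • fockE (p :: γ)) ∧
    ((ContinuousLinearMap.adjoint (W i) * W i -
          ∑ j : Fin n, W j * ContinuousLinearMap.adjoint (W j)) (fockE ([] : Word n)) =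
        ((1 / b [i] : ℝ) : ℂ) • fockE ([] : Word n)) ∧
    ((∀ ε : ℝ, 0 < ε → ∃ m : ℕ, ∀ (p : Fin n) (γ : Word n), m ≤ γ.length →
        |b (p :: γ) / b (i :: p :: γ) - b γ / b (p :: γ)| < ε) →
      IsCompactOperator
        (ContinuousLinearMap.adjoint (W i) * W i -
          ∑ j : Fin n, W j * ContinuousLinearMap.adjoint (W j))) := by
  classical
  set T := ContinuousLinearMap.adjoint (W i) * W i -
      ∑ j : Fin n, W j * ContinuousLinearMap.adjoint (W j) with hTdef
  have h1 : ∀ (p : Fin n) (γ : Word n), T (fockE (p :: γ)) =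
      ((b (p :: γ) / b (i :: p :: γ) - b γ / b (p :: γ) : ℝ) : ℂ) • fockE (p :: γ) := by
    intro p γ
    have hA : (ContinuousLinearMap.adjoint (W i) * W i) (fockE (p :: γ))
        = ((b (p :: γ) / b (i :: p :: γ) : ℝ) : ℂ) • fockE (p :: γ) := by
      rw [ContinuousLinearMap.mul_apply, hW, map_smul, adj_cons b W hW, smul_smul,
        ← Complex.ofReal_mul, Real.mul_self_sqrt (div_nonneg (hbpos _).le (hbpos _).le)]
    have hS : ∀ j : Fin n, (W j * ContinuousLinearMap.adjoint (W j)) (fockE (p :: γ))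
        = if j = p then ((b γ / b (p :: γ) : ℝ) : ℂ) • fockE (p :: γ) else 0 := by
      intro j
      rw [ContinuousLinearMap.mul_apply]
      by_cases h : j = p
      · subst h
        rw [adj_cons b W hW, map_smul, hW, smul_smul, ← Complex.ofReal_mul,
          Real.mul_self_sqrt (div_nonneg (hbpos _).le (hbpos _).le), if_pos rfl]
      · rw [adj_ne b W hW j (p :: γ)
          (fun γ' hc => h (by injection hc with h1 _; exact h1.symm)),
          map_zero, if_neg h]
    rw [hTdef, ContinuousLinearMap.sub_apply, ContinuousLinearMap.sum_apply,
      Finset.sum_congr rfl (fun j _ => hS j),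
      Finset.sum_ite_eq' Finset.univ p
        (fun _ => ((b γ / b (p :: γ) : ℝ) : ℂ) • fockE (p :: γ)),
      if_pos (Finset.mem_univ p), hA, ← sub_smul, ← Complex.ofReal_sub]
  have h2 : T (fockE ([] : Word n)) = ((1 / b [i] : ℝ) : ℂ) • fockE ([] : Word n) := by
    have hA : (ContinuousLinearMap.adjoint (W i) * W i) (fockE ([] : Word n))
        = ((1 / b [i] : ℝ) : ℂ) • fockE ([] : Word n) := by
      rw [ContinuousLinearMap.mul_apply, hW, map_smul, adj_cons b W hW, smul_smul,
        ← Complex.ofReal_mul, Real.mul_self_sqrt (div_nonneg (hbpos _).le (hbpos _).le), hb0]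
    have hS : ∀ j : Fin n, (W j * ContinuousLinearMap.adjoint (W j)) (fockE ([] : Word n))
        = 0 := by
      intro j
      rw [ContinuousLinearMap.mul_apply,
        adj_ne b W hW j [] (fun γ' hc => nomatch hc), map_zero]
    rw [hTdef, ContinuousLinearMap.sub_apply, ContinuousLinearMap.sum_apply,
      Finset.sum_congr rfl (fun j _ => hS j), Finset.sum_const_zero, sub_zero, hA]
  refine ⟨h1, h2, ?_⟩
  intro hyp
  set lam : Word n → ℝ := fun α => match α with
    | [] => 1 / b [i]
    | p :: γ => b (p :: γ) / b (i :: p :: γ) - b γ / b (p :: γ) with hlam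
  apply diag_compact T lam
  · intro α
    match α with
    | [] => exact h2
    | p :: γ => exact h1 p γ
  · intro ε hε
    obtain ⟨m, hm⟩ := hyp ε hε
    refine ⟨m + 1, fun α hα => ?_⟩
    match α with
    | [] => simp at hα
    | p :: γ => exact hm p γ (by simp at hα; omega)
end
end

section
/- Let g be an admissible free holomorphic function whose associated weighted left creation tuple W on F²(H_n) satisfies: ∑_{k,|α|=k} a_α W_α W_α* converges in operator norm (where g^{-1} = 1 + ∑ a_α Z_α). Let π be a unital *-representation of C*(W) on a Hilbert space K that is NOT of Cuntz type, i.e., Δ := ∑ a_α π(W_α)π(W_α)* ≠ 0. Then π is isometric: ‖π(x)‖ = ‖x‖ for every x ∈ C*(W), so C*(W) and C*(π(W_1),…,π(W_n)) are *-isomorphic. -/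
open scoped ENNReal Topology

noncomputable section

/-- The operator `W_β = W_{i₁} ⋯ W_{i_k}` for a word `β = g_{i₁}⋯g_{i_k}`. -/
def Wword {n : ℕ} (W : Fin n → (Fock n →L[ℂ] Fock n)) (β : Word n) :
    Fock n →L[ℂ] Fock n := (β.map W).prod

/-- The partial sums `∑_{p=0}^{N} ∑_{|α|=p} a_α W_α W_α*`. -/
def partialSumOp {n : ℕ} (a : Word n → ℝ) (W : Fin n → (Fock n →L[ℂ] Fock n)) (N : ℕ) :
    Fock n →L[ℂ] Fock n :=
  ∑ p ∈ Finset.range (N + 1), ∑ f : Fin p → Fin n,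
    (a (List.ofFn f) : ℂ) •
      (Wword W (List.ofFn f) * ContinuousLinearMap.adjoint (Wword W (List.ofFn f)))

/-- The C*-algebra `C*(W)` generated by `W₁,…,W_n` and the identity, as a closed star
subalgebra of `B(F²(H_n))`. -/
def CstarW {n : ℕ} (W : Fin n → (Fock n →L[ℂ] Fock n)) :
    StarSubalgebra ℂ (Fock n →L[ℂ] Fock n) :=
  (StarAlgebra.adjoin ℂ (Set.range W)).topologicalClosure


local notation "⟪" x ", " y "⟫" => @inner ℂ _ _ x y


lemma inner_fockE_s19 {n : ℕ} (α β : Word n) : ⟪fockE α, fockE β⟫ = if α = β then 1 else 0 := by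
  rcases eq_or_ne α β with h | h
  · subst h
    rw [fockE, lp.inner_single_left, lp.single_apply_self, if_pos rfl]
    simp
  · rw [fockE, fockE, lp.inner_single_left, lp.single_apply_ne _ _ _ h, if_neg h]
    simp

lemma fockE_ext {n : ℕ} {u v : Fock n} (h : ∀ δ, ⟪fockE δ, u⟫ = ⟪fockE δ, v⟫) : u = v := by
  apply lp.ext
  funext δ
  have := h δ
  rwa [fockE, lp.inner_single_left, lp.inner_single_left, RCLike.inner_apply, map_one, mul_one,
    RCLike.inner_apply, map_one, mul_one] at this

lemma hasSum_fockE {n : ℕ} (y : Fock n) : HasSum (fun γ => y γ • fockE γ) y := by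
  have h := lp.hasSum_single ENNReal.ofNat_ne_top y
  convert h using 2 with γ
  apply lp.ext
  funext j
  simp [fockE, lp.single_apply, lp.coeFn_smul, Pi.single_apply]

lemma clm_ext_fockE {n : ℕ} {T S : Fock n →L[ℂ] Fock n}
    (h : ∀ γ, T (fockE γ) = S (fockE γ)) : T = S := by
  apply ContinuousLinearMap.ext
  intro y
  have hT := (hasSum_fockE y).mapL T
  have hS := (hasSum_fockE y).mapL S
  simp only [map_smul] at hT hS
  simp only [h] at hT
  exact hT.unique hS

section Wlem
variable {n : ℕ} (b : Word n → ℝ) (W : Fin n → (Fock n →L[ℂ] Fock n))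

lemma Wword_nil : Wword W ([] : Word n) = 1 := rfl

lemma Wword_cons (i : Fin n) (β : Word n) : Wword W (i :: β) = W i * Wword W β := by
  simp [Wword, List.map_cons, List.prod_cons]

variable (hbpos : ∀ α, 0 < b α)
  (hW : ∀ (i : Fin n) (α : Word n), W i (fockE α) =
    (Real.sqrt (b α / b (i :: α)) : ℂ) • fockE (i :: α))

include hbpos hW in
lemma Wword_apply (β γ : Word n) :
    Wword W β (fockE γ) = ((Real.sqrt (b γ / b (β ++ γ)) : ℝ) : ℂ) • fockE (β ++ γ) := by
  induction β with
  | nil =>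
    simp [Wword_nil, div_self (hbpos γ).ne']
  | cons i β ih =>
    rw [Wword_cons, ContinuousLinearMap.mul_apply, ih, map_smul, hW, smul_smul, ← Complex.ofReal_mul,
      ← Real.sqrt_mul (div_nonneg (hbpos _).le (hbpos _).le)]
    have : b γ / b (β ++ γ) * (b (β ++ γ) / b (i :: (β ++ γ))) = b γ / b (i :: (β ++ γ)) := by
      field_simp
      rw [mul_comm (b (β ++ γ)) (b (i :: (β ++ γ))), mul_div_mul_right _ _ (hbpos _).ne']
    rw [this]
    rfl

include hbpos hW in
lemma adj_Wword_prefix (β δ : Word n) :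
    ContinuousLinearMap.adjoint (Wword W β) (fockE (β ++ δ)) =
      ((Real.sqrt (b δ / b (β ++ δ)) : ℝ) : ℂ) • fockE δ := by
  apply fockE_ext
  intro δ'
  rw [ContinuousLinearMap.adjoint_inner_right, Wword_apply b W hbpos hW, inner_smul_left,
    inner_smul_right, inner_fockE_s19, inner_fockE_s19, Complex.conj_ofReal]
  by_cases h : δ' = δ
  · subst h; simp
  · rw [if_neg (fun hc => h (List.append_cancel_left hc)), if_neg h, mul_zero, mul_zero]

include hbpos hW in
lemma adj_Wword_no_prefix (β γ : Word n) (h : ∀ δ, γ ≠ β ++ δ) :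
    ContinuousLinearMap.adjoint (Wword W β) (fockE γ) = 0 := by
  apply fockE_ext
  intro δ'
  rw [ContinuousLinearMap.adjoint_inner_right, Wword_apply b W hbpos hW, inner_smul_left,
    inner_fockE_s19, if_neg (fun hc => h δ' hc.symm), mul_zero, inner_zero_right]

include hbpos hW in
lemma WWstar_prefix (β δ : Word n) :
    (Wword W β * ContinuousLinearMap.adjoint (Wword W β)) (fockE (β ++ δ)) =
      ((b δ / b (β ++ δ) : ℝ) : ℂ) • fockE (β ++ δ) := by
  rw [ContinuousLinearMap.mul_apply, adj_Wword_prefix b W hbpos hW, map_smul,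
    Wword_apply b W hbpos hW, smul_smul, ← Complex.ofReal_mul,
    Real.mul_self_sqrt (div_nonneg (hbpos _).le (hbpos _).le)]

include hbpos hW in
lemma WWstar_no_prefix (β γ : Word n) (h : ∀ δ, γ ≠ β ++ δ) :
    (Wword W β * ContinuousLinearMap.adjoint (Wword W β)) (fockE γ) = 0 := by
  rw [ContinuousLinearMap.mul_apply, adj_Wword_no_prefix b W hbpos hW _ _ h, map_zero]

end Wlem

section S
variable {n : ℕ} (a b : Word n → ℝ) (W : Fin n → (Fock n →L[ℂ] Fock n))
  (hbpos : ∀ α, 0 < b α)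
  (hW : ∀ (i : Fin n) (α : Word n), W i (fockE α) =
    (Real.sqrt (b α / b (i :: α)) : ℂ) • fockE (i :: α))


include hbpos hW in
lemma sum_WWstar (γ : Word n) (p : ℕ) :
    (∑ f : Fin p → Fin n, (a (List.ofFn f) : ℂ) •
      (Wword W (List.ofFn f) * ContinuousLinearMap.adjoint (Wword W (List.ofFn f)))) (fockE γ) =
    if p ≤ γ.length then ((a (γ.take p) * (b (γ.drop p) / b γ) : ℝ) : ℂ) • fockE γ else 0 := by
  rw [ContinuousLinearMap.sum_apply]
  simp only [ContinuousLinearMap.smul_apply]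
  split_ifs with hp
  · have hlen : (γ.take p).length = p := by simp [List.length_take, hp]
    set f₀ : Fin p → Fin n := fun j => (γ.take p).get (Fin.cast hlen.symm j) with hf₀
    have hofn : List.ofFn f₀ = γ.take p := by
      apply List.ext_get (by simp [hlen])
      intro i h1 h2
      simp [f₀, List.get_ofFn]
    rw [Finset.sum_eq_single_of_mem f₀ (Finset.mem_univ _)]
    · have hγ : γ.take p ++ γ.drop p = γ := List.take_append_drop p γ
      have h2 := WWstar_prefix b W hbpos hW (γ.take p) (γ.drop p)
      rw [hγ] at h2
      rw [hofn, h2, smul_smul, ← Complex.ofReal_mul]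
    · intro f _ hfne
      have hno : ∀ δ, γ ≠ List.ofFn f ++ δ := by
        intro δ hc
        apply hfne
        apply List.ofFn_injective
        rw [hofn, hc, List.take_left' (List.length_ofFn (f := f))]
      rw [WWstar_no_prefix b W hbpos hW _ _ hno, smul_zero]
  · apply Finset.sum_eq_zero
    intro f _
    have hno : ∀ δ, γ ≠ List.ofFn f ++ δ := by
      intro δ hc
      apply hp
      rw [hc, List.length_append, List.length_ofFn]
      exact Nat.le_add_right _ _
    rw [WWstar_no_prefix b W hbpos hW _ _ hno, smul_zero]

include hbpos hW in
lemma partialSumOp_apply (ha0 : a [] = 1)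
    (hinv : ∀ γ : Word n, γ ≠ [] →
      b γ + ∑ k ∈ Finset.Icc 1 γ.length, a (γ.take k) * b (γ.drop k) = 0)
    (γ : Word n) (N : ℕ) (hN : γ.length ≤ N) :
    partialSumOp a W N (fockE γ) = if γ = [] then fockE [] else 0 := by
  rw [partialSumOp, ContinuousLinearMap.sum_apply]
  have hsum : ∀ p ∈ Finset.range (N + 1),
      (∑ f : Fin p → Fin n, (a (List.ofFn f) : ℂ) •
        (Wword W (List.ofFn f) * ContinuousLinearMap.adjoint (Wword W (List.ofFn f))))
        (fockE γ) =
      if p ≤ γ.length then ((a (γ.take p) * (b (γ.drop p) / b γ) : ℝ) : ℂ) • fockE γ else 0 :=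
    fun p _ => sum_WWstar a b W hbpos hW γ p
  rw [Finset.sum_congr rfl hsum]
  rw [← Finset.sum_subset (Finset.range_subset_range.2 (by omega) :
      Finset.range (γ.length + 1) ⊆ Finset.range (N + 1))]
  · have hle : ∀ p ∈ Finset.range (γ.length + 1), p ≤ γ.length := by
      intro p hp; exact Nat.lt_succ_iff.mp (Finset.mem_range.mp hp)
    rw [Finset.sum_congr rfl (fun p hp => if_pos (hle p hp))]
    rw [← Finset.sum_smul]
    have hcoe : (∑ p ∈ Finset.range (γ.length + 1),
        ((a (γ.take p) * (b (γ.drop p) / b γ) : ℝ) : ℂ)) =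
        (((∑ p ∈ Finset.range (γ.length + 1), a (γ.take p) * b (γ.drop p)) / b γ : ℝ) : ℂ) := by
      push_cast
      rw [Finset.sum_div]
      congr 1
      funext p
      ring
    rw [hcoe]
    by_cases hγ : γ = []
    · subst hγ
      simp [Finset.sum_range_one, ha0, div_self (hbpos ([] : Word n)).ne']
    · rw [if_neg hγ]
      have hS : (∑ p ∈ Finset.range (γ.length + 1), a (γ.take p) * b (γ.drop p)) = 0 := by
        rw [Finset.sum_range_succ']
        have hI := hinv γ hγ
        rw [← Finset.Ico_add_one_right_eq_Icc, Finset.sum_Ico_eq_sum_range] at hI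
        simp only [Nat.succ_sub_one, Nat.add_sub_cancel] at hI
        simp only [List.take_zero, List.drop_zero, ha0, one_mul]
        rw [add_comm, ← hI]
        congr 1
        exact Finset.sum_congr rfl fun i _ => by rw [Nat.add_comm]
      rw [hS]
      norm_num
  · intro p hp1 hp2
    rw [if_neg]
    simp only [Finset.mem_range, not_lt] at hp2
    omega
end S

section D
variable {n : ℕ} (a b : Word n → ℝ) (W : Fin n → (Fock n →L[ℂ] Fock n))
  (hbpos : ∀ α, 0 < b α)
  (hW : ∀ (i : Fin n) (α : Word n), W i (fockE α) =
    (Real.sqrt (b α / b (i :: α)) : ℂ) • fockE (i :: α))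
  (ha0 : a [] = 1)
  (hinv : ∀ γ : Word n, γ ≠ [] →
      b γ + ∑ k ∈ Finset.Icc 1 γ.length, a (γ.take k) * b (γ.drop k) = 0)
  (Δ : Fock n →L[ℂ] Fock n)
  (hconv : Filter.Tendsto (fun N : ℕ => partialSumOp a W N) Filter.atTop (𝓝 Δ))

include hbpos hW ha0 hinv hconv in
lemma Δ_fockE (γ : Word n) : Δ (fockE γ) = if γ = [] then fockE [] else 0 := by
  have hcont : Filter.Tendsto (fun N : ℕ => partialSumOp a W N (fockE γ)) Filter.atTop
      (𝓝 (Δ (fockE γ))) := by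
    have := (ContinuousLinearMap.apply ℂ (Fock n) (fockE γ)).continuous.tendsto Δ
    exact this.comp hconv
  have heq : ∀ᶠ N in (Filter.atTop : Filter ℕ),
      partialSumOp a W N (fockE γ) = if γ = [] then fockE [] else 0 :=
    Filter.eventually_atTop.2 ⟨γ.length, fun N hN => partialSumOp_apply a b W hbpos hW ha0 hinv γ N hN⟩
  exact tendsto_nhds_unique (hcont.congr' heq) tendsto_const_nhds

include hbpos hW ha0 hinv hconv in
lemma Δ_apply (y : Fock n) : Δ y = ⟪fockE ([] : Word n), y⟫ • fockE [] := by
  have : Δ = ((innerSL ℂ (fockE ([] : Word n))).smulRight (fockE ([] : Word n))) := by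
    apply clm_ext_fockE
    intro γ
    rw [Δ_fockE a b W hbpos hW ha0 hinv Δ hconv γ]
    simp only [ContinuousLinearMap.smulRight_apply, innerSL_apply_apply, inner_fockE_s19]
    by_cases h : γ = []
    · subst h; simp
    · rw [if_neg h, if_neg (fun hc => h hc.symm), zero_smul]
  rw [this]; rfl

include hbpos hW ha0 hinv hconv in
lemma Δ_sandwich (T : Fock n →L[ℂ] Fock n) :
    Δ * T * Δ = ⟪fockE ([] : Word n), T (fockE [])⟫ • Δ := by
  apply ContinuousLinearMap.ext
  intro y
  simp only [ContinuousLinearMap.mul_apply, ContinuousLinearMap.smul_apply]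
  rw [Δ_apply a b W hbpos hW ha0 hinv Δ hconv y, map_smul, map_smul, Δ_apply a b W hbpos hW ha0 hinv Δ hconv (T (fockE [])),
    smul_smul, smul_smul, mul_comm]

include hbpos hW ha0 hinv hconv in
lemma Δ_adjoint : ContinuousLinearMap.adjoint Δ = Δ := by
  symm
  rw [ContinuousLinearMap.eq_adjoint_iff]
  intro x y
  rw [Δ_apply a b W hbpos hW ha0 hinv Δ hconv x, Δ_apply a b W hbpos hW ha0 hinv Δ hconv y, inner_smul_left, inner_smul_right]
  rw [← inner_conj_symm x (fockE ([] : Word n))]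
  ring

include hbpos hW ha0 hinv hconv in
lemma Δ_mul_Δ : Δ * Δ = Δ := by
  have := Δ_sandwich a b W hbpos hW ha0 hinv Δ hconv 1
  rw [mul_one] at this
  rw [this, ContinuousLinearMap.one_apply, inner_fockE_s19, if_pos rfl, one_smul]

end D

lemma Wword_mem {n : ℕ} (W : Fin n → (Fock n →L[ℂ] Fock n)) (β : Word n) :
    Wword W β ∈ CstarW W := by
  induction β with
  | nil => exact one_mem _
  | cons i β ih =>
    rw [Wword]
    simp only [List.map_cons, List.prod_cons]
    exact mul_mem (StarSubalgebra.le_topologicalClosure _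
      (StarAlgebra.subset_adjoin ℂ _ ⟨i, rfl⟩)) ih


set_option maxHeartbeats 2000000 in
set_option synthInstance.maxHeartbeats 400000 in
/-- let `g` be an admissible free holomorphic function (positive coefficients
`b` with `b_{g₀}=1`, `sup_α b_α/b_{g_iα} < ∞`, and a geometric growth bound on the level
sums `∑_{|α|=k} b_α²`) whose inverse has coefficients `a`, and suppose the series
`∑ a_α W_α W_α*` converges in operator norm to `Δ ∈ C*(W)`.  If `π` is a unital
*-representation of `C*(W)` on a Hilbert space `K` that is not of Cuntz type, i.e.
`π(Δ) ≠ 0`, then `π` is isometric: `‖π(x)‖ = ‖x‖` for all `x ∈ C*(W)`; in particular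
`C*(W)` and `C*(π(W₁),…,π(W_n))` are *-isomorphic. -/
theorem stmt19 {n : ℕ} {K : Type} [NormedAddCommGroup K] [InnerProductSpace ℂ K]
    [CompleteSpace K]
    (a b : Word n → ℝ) (hbpos : ∀ α, 0 < b α) (hb0 : b [] = 1) (ha0 : a [] = 1)
    (hsup : ∀ i : Fin n, ∃ C : ℝ, ∀ α, b α / b (i :: α) ≤ C)
    (hgrowth : ∃ C : ℝ, 0 < C ∧ ∀ k : ℕ,
      (∑ f : Fin k → Fin n, (b (List.ofFn f)) ^ 2) ≤ C ^ (2 * k))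
    (hinv : ∀ γ : Word n, γ ≠ [] →
      b γ + ∑ k ∈ Finset.Icc 1 γ.length, a (γ.take k) * b (γ.drop k) = 0)
    (W : Fin n → (Fock n →L[ℂ] Fock n))
    (hW : ∀ (i : Fin n) (α : Word n), W i (fockE α) =
      (Real.sqrt (b α / b (i :: α)) : ℂ) • fockE (i :: α))
    (Δ : Fock n →L[ℂ] Fock n)
    (hconv : Filter.Tendsto (fun N : ℕ => partialSumOp a W N) Filter.atTop (𝓝 Δ))
    (hΔmem : Δ ∈ CstarW W)
    (π : (CstarW W) →⋆ₐ[ℂ] (K →L[ℂ] K))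
    (hnotCuntz : π ⟨Δ, hΔmem⟩ ≠ 0) :
    ∀ x : CstarW W, ‖π x‖ = ‖(x : Fock n →L[ℂ] Fock n)‖ := by
  haveI hclosed : IsClosed ((CstarW W : Set (Fock n →L[ℂ] Fock n))) :=
    StarSubalgebra.isClosed_topologicalClosure _
  -- setup of the projection `P = π(Δ)` and a unit vector it fixes
  set D : CstarW W := ⟨Δ, hΔmem⟩ with hD
  have hDD : D * D = D := Subtype.ext (Δ_mul_Δ a b W hbpos hW ha0 hinv Δ hconv)
  have hDstar : star D = D := Subtype.ext (by
    show star Δ = Δ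
    rw [ContinuousLinearMap.star_eq_adjoint]
    exact Δ_adjoint a b W hbpos hW ha0 hinv Δ hconv)
  set P : K →L[ℂ] K := π D with hP
  have hPP : P * P = P := by rw [hP, ← map_mul, hDD]
  have hPstar : star P = P := by rw [hP, ← map_star, hDstar]
  have hPadj : ContinuousLinearMap.adjoint P = P := by
    rw [← ContinuousLinearMap.star_eq_adjoint, hPstar]
  obtain ⟨v, hv⟩ : ∃ v, P v ≠ 0 := by
    by_contra h
    push_neg at h
    exact hnotCuntz (ContinuousLinearMap.ext fun u => by
      rw [ContinuousLinearMap.zero_apply]; exact h u)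
  set ξ : K := (‖P v‖ : ℂ)⁻¹ • P v with hξdef
  have hPξ : P ξ = ξ := by
    rw [hξdef, map_smul]
    congr 1
    have := congrArg (fun T : K →L[ℂ] K => T v) hPP
    simpa [ContinuousLinearMap.mul_apply] using this
  have hξ1 : ⟪ξ, ξ⟫ = 1 := by
    rw [hξdef, inner_smul_left, inner_smul_right]
    rw [map_inv₀, Complex.conj_ofReal]
    rw [inner_self_eq_norm_sq_to_K]
    have hvne : (‖P v‖ : ℂ) ≠ 0 := by
      simpa using (norm_ne_zero_iff.2 hv)
    field_simp
    rfl
  -- the key diagonal matrix-coefficient identity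
  have key : ∀ (y : CstarW W) (β : Word n),
      ((b β : ℝ) : ℂ) *
        ⟪(π ⟨Wword W β, Wword_mem W β⟩) ξ, (π y) ((π ⟨Wword W β, Wword_mem W β⟩) ξ)⟫
      = ⟪fockE β, (y : Fock n →L[ℂ] Fock n) (fockE β)⟫ := by
    intro y β
    set wβ : CstarW W := ⟨Wword W β, Wword_mem W β⟩ with hwβ
    set z : CstarW W := star wβ * y * wβ with hz
    have hstarπ : ContinuousLinearMap.adjoint (π wβ) = π (star wβ) := by
      rw [← ContinuousLinearMap.star_eq_adjoint, ← map_star]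
    have h1 : ⟪(π wβ) ξ, (π y) ((π wβ) ξ)⟫ = ⟪ξ, (π z) ξ⟫ := by
      rw [hz, map_mul, map_mul]
      simp only [ContinuousLinearMap.mul_apply]
      rw [← hstarπ, ContinuousLinearMap.adjoint_inner_right]
    have h2 : ⟪ξ, (P * (π z) * P) ξ⟫ = ⟪ξ, (π z) ξ⟫ := by
      simp only [ContinuousLinearMap.mul_apply, hPξ]
      conv_lhs => rw [← hPadj]
      rw [ContinuousLinearMap.adjoint_inner_right, hPξ]
    have h3 : D * z * D =
        (⟪fockE ([] : Word n), ((z : CstarW W) : Fock n →L[ℂ] Fock n) (fockE [])⟫) • D := by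
      apply Subtype.ext
      push_cast
      exact Δ_sandwich a b W hbpos hW ha0 hinv Δ hconv _
    have h4 : P * (π z) * P =
        (⟪fockE ([] : Word n), ((z : CstarW W) : Fock n →L[ℂ] Fock n) (fockE [])⟫) • P := by
      rw [hP, ← map_mul, ← map_mul, h3]
      exact π.toAlgHom.toLinearMap.map_smul _ _
    -- compute the scalar
    have hWβ0 : Wword W β (fockE []) = ((Real.sqrt (1 / b β) : ℝ) : ℂ) • fockE β := by
      have := Wword_apply b W hbpos hW β []
      simpa [hb0] using this
    have hzcoe : ((z : CstarW W) : Fock n →L[ℂ] Fock n) =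
        ContinuousLinearMap.adjoint (Wword W β) *
          ((y : Fock n →L[ℂ] Fock n) * Wword W β) := by
      have hcoe1 : ((star wβ : CstarW W) : Fock n →L[ℂ] Fock n) =
          ContinuousLinearMap.adjoint (Wword W β) := by
        rw [StarMemClass.coe_star, ← ContinuousLinearMap.star_eq_adjoint]
      rw [hz, MulMemClass.coe_mul, MulMemClass.coe_mul, hcoe1, mul_assoc]
    have hφ : ⟪fockE ([] : Word n), ((z : CstarW W) : Fock n →L[ℂ] Fock n) (fockE [])⟫ =
        ((1 / b β : ℝ) : ℂ) * ⟪fockE β, (y : Fock n →L[ℂ] Fock n) (fockE β)⟫ := by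
      rw [hzcoe]
      simp only [ContinuousLinearMap.mul_apply]
      rw [ContinuousLinearMap.adjoint_inner_right, hWβ0, map_smul, inner_smul_left,
        inner_smul_right, Complex.conj_ofReal, ← mul_assoc, ← Complex.ofReal_mul,
        Real.mul_self_sqrt (one_div_nonneg.2 (hbpos β).le)]
    rw [h1, ← h2, h4]
    rw [ContinuousLinearMap.smul_apply, inner_smul_right, hPξ, hξ1, mul_one, hφ]
    rw [← mul_assoc, ← Complex.ofReal_mul, mul_one_div_cancel (hbpos β).ne',
      Complex.ofReal_one, one_mul]
  -- injectivity of `π`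
  have hinj : Function.Injective π := by
    rw [injective_iff_map_eq_zero]
    intro z hz
    have hzero : ∀ β : Word n, (z : Fock n →L[ℂ] Fock n) (fockE β) = 0 := by
      intro β
      have hk := key (star z * z) β
      have hπ0 : π (star z * z) = 0 := by rw [map_mul, hz, mul_zero]
      rw [hπ0] at hk
      simp only [ContinuousLinearMap.zero_apply, inner_zero_right, mul_zero] at hk
      have hcoe : ((star z * z : CstarW W) : Fock n →L[ℂ] Fock n) =
          ContinuousLinearMap.adjoint (z : Fock n →L[ℂ] Fock n) *
            (z : Fock n →L[ℂ] Fock n) := by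
        push_cast
        rw [← ContinuousLinearMap.star_eq_adjoint]
        rfl
      rw [hcoe] at hk
      rw [ContinuousLinearMap.mul_apply, ContinuousLinearMap.adjoint_inner_right] at hk
      exact inner_self_eq_zero.mp hk.symm
    apply Subtype.ext
    show (z : Fock n →L[ℂ] Fock n) = ((0 : CstarW W) : Fock n →L[ℂ] Fock n)
    rw [ZeroMemClass.coe_zero]
    exact clm_ext_fockE fun γ => by rw [hzero γ, ContinuousLinearMap.zero_apply]
  intro x
  exact NonUnitalStarAlgHom.norm_map π hinj x
end
end
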